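/- Let M be a learner (in the model below, with one additional stack) attempting to learn the class ℒ of all languages L_e = {0,1}* − {e} with e ∈ {0,1}*. If there exist two finite sequences σ and τ of binary strings with range(σ) − range(τ) ≠ ∅ and range(τ) − range(σ) ≠ ∅ such that M has the same Tape 0 content and the same stack content after processing σ as after processing τ, then M does not learn ℒ. -/

import Mathlib

open Classical

/-- A set of strings is regular iff it is accepted by a deterministic finite automaton. -/
def IsRegularLang {γ : Type} (P : Set (List γ)) : Prop :=
  ∃ (Q : Type) (_ : Fintype Q) (M : DFA γ Q), ∀ w, w ∈ M.accepts ↔ w ∈ P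

/-- The convolution of two strings, padding the shorter one with `none` (the symbol □). -/
def convP {α β : Type} (x : List α) (y : List β) : List (Option α × Option β) :=
  (List.range (max x.length y.length)).map fun i => (x[i]?, y[i]?)

/-- Convolution padded with `(none, none)` up to a prescribed length `L`
(this is the convolution of `x·□^*` and `y·□^*`, both padded to length `L`). -/
def convPad {α β : Type} (x : List α) (y : List β) (L : ℕ) : List (Option α × Option β) :=
  (List.range L).map fun i => (x[i]?, y[i]?)

/-- The convolution of three strings. -/
def conv3 {α β γ : Type} (x : List α) (y : List β) (z : List γ) :
    List (Option α × Option β × Option γ) :=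
  (List.range (max x.length (max y.length z.length))).map fun i =>
    (x[i]?, y[i]?, z[i]?)

/-- The convolution of four strings. -/
def conv4 {α β γ δ : Type} (a : List α) (b : List β) (c : List γ) (d : List δ) :
    List (Option α × Option β × Option γ × Option δ) :=
  (List.range (max (max a.length b.length) (max c.length d.length))).map fun i =>
    (a[i]?, b[i]?, getElem? c i, d[i]?)

/-- A partial function on strings is automatic iff its graph of convolutions is regular. -/
def IsAutomatic {α β : Type} (f : List α → Option (List β)) : Prop :=
  IsRegularLang { w | ∃ x y, f x = some y ∧ w = convP x y }

/-- Tape symbols: the left-end marker ⊞, the blank □, or an alphabet symbol. -/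
inductive TSym (Γ : Type) : Type
  | lend : TSym Γ
  | blank : TSym Γ
  | sym : Γ → TSym Γ

/-- Head movement: `true` = one cell to the right, `false` = one cell to the left
(capped at cell 0). -/
def tmove (b : Bool) (h : ℕ) : ℕ := if b then h + 1 else h - 1

/-- The tape holding ⊞ w □ □ ⋯ -/
def listTape {Γ : Type} (w : List Γ) : ℕ → TSym Γ
  | 0 => TSym.lend
  | n + 1 =>
    match w[n]? with
    | some a => TSym.sym a
    | none => TSym.blank

/-- The tape `t` starts with ⊞ w □ (the content beyond the first blank is unconstrained). -/
def TapeStartsWith {Γ : Type} (t : ℕ → TSym Γ) (w : List Γ) : Prop :=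
  t 0 = TSym.lend ∧ (∀ i : Fin w.length, t (i.1 + 1) = TSym.sym (w.get i)) ∧
    t (w.length + 1) = TSym.blank

/-- A configuration of a one-tape Turing machine. -/
structure TMConfig (Q Γ : Type) where
  state : Q
  head : ℕ
  tape : ℕ → TSym Γ

/-- A deterministic position-faithful one-tape Turing machine with input alphabet `α`,
output alphabet `β` and (finite) working alphabet `Γ` into which both embed.  The
left-end marker ⊞ occurs exactly at cell 0: it can never be modified (the head moves
right on reading it) and it is never written elsewhere. -/
structure DPFTM (α β Γ : Type) where
  Q : Type
  finQ : Fintype Q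
  finΓ : Fintype Γ
  inputEmb : α → Γ
  outputEmb : β → Γ
  inputInj : Function.Injective inputEmb
  outputInj : Function.Injective outputEmb
  init : Q
  accept : Q
  reject : Q
  δ : Q → TSym Γ → Q × TSym Γ × Bool
  faithful_end : ∀ q, (δ q TSym.lend).2.1 = TSym.lend ∧ (δ q TSym.lend).2.2 = true
  faithful_noend : ∀ q a, a ≠ TSym.lend → (δ q a).2.1 ≠ TSym.lend

namespace DPFTM

def step {α β Γ : Type} (M : DPFTM α β Γ) (c : TMConfig M.Q Γ) : TMConfig M.Q Γ :=
  ⟨(M.δ c.state (c.tape c.head)).1,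
   tmove (M.δ c.state (c.tape c.head)).2.2 c.head,
   Function.update c.tape c.head (M.δ c.state (c.tape c.head)).2.1⟩

/-- The initial configuration on input `x`: tape ⊞ x □ □ ⋯, head on ⊞. -/
def initConfig {α β Γ : Type} (M : DPFTM α β Γ) (x : List α) : TMConfig M.Q Γ :=
  ⟨M.init, 0, listTape (x.map M.inputEmb)⟩

/-- The configuration after `n` steps on input `x`. -/
def conf {α β Γ : Type} (M : DPFTM α β Γ) (x : List α) (n : ℕ) : TMConfig M.Q Γ :=
  M.step^[n] (M.initConfig x)

/-- The machine has halted (in the accepting or in the rejecting state). -/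
def Halted {α β Γ : Type} (M : DPFTM α β Γ) (c : TMConfig M.Q Γ) : Prop :=
  c.state = M.accept ∨ c.state = M.reject

/-- On input `x` the machine halts, accepting, after exactly `n` steps. -/
def HaltsAcceptAt {α β Γ : Type} (M : DPFTM α β Γ) (x : List α) (n : ℕ) : Prop :=
  (M.conf x n).state = M.accept ∧ ∀ m < n, ¬ M.Halted (M.conf x m)

/-- `M` computes the partial function `f`: for every `x`, `f x = some y` iff `M`,
started on ⊞ x □ □ ⋯, eventually halts in the accepting state with tape content
starting with ⊞ y □. -/
def Computes {α β Γ : Type} (M : DPFTM α β Γ) (f : List α → Option (List β)) : Prop :=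
  ∀ x y, f x = some y ↔
    ∃ n, M.HaltsAcceptAt x n ∧ TapeStartsWith (M.conf x n).tape (y.map M.outputEmb)

/-- There is a constant `c` such that on every input `x` the computation lasts at most
`c·(|x|+1)` steps. -/
def LinearTime {α β Γ : Type} (M : DPFTM α β Γ) : Prop :=
  ∃ c : ℕ, ∀ x : List α, ∃ n ≤ c * (x.length + 1), M.Halted (M.conf x n)

end DPFTM

/-- A non-deterministic position-faithful one-tape Turing machine. -/
structure NPFTM (α β Γ : Type) where
  Q : Type
  finQ : Fintype Q
  finΓ : Fintype Γ
  inputEmb : α → Γ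
  outputEmb : β → Γ
  inputInj : Function.Injective inputEmb
  outputInj : Function.Injective outputEmb
  init : Q
  accept : Q
  reject : Q
  δ : Q → TSym Γ → Set (Q × TSym Γ × Bool)
  faithful_end : ∀ q t, t ∈ δ q TSym.lend → t.2.1 = TSym.lend ∧ t.2.2 = true
  faithful_noend : ∀ q a t, a ≠ TSym.lend → t ∈ δ q a → t.2.1 ≠ TSym.lend

namespace NPFTM

/-- The one-step relation between configurations. -/
def StepRel {α β Γ : Type} (M : NPFTM α β Γ) (c c' : TMConfig M.Q Γ) : Prop :=
  ∃ t ∈ M.δ c.state (c.tape c.head),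
    c' = ⟨t.1, tmove t.2.2 c.head, Function.update c.tape c.head t.2.1⟩

def initConfig {α β Γ : Type} (M : NPFTM α β Γ) (x : List α) : TMConfig M.Q Γ :=
  ⟨M.init, 0, listTape (x.map M.inputEmb)⟩

def Halted {α β Γ : Type} (M : NPFTM α β Γ) (c : TMConfig M.Q Γ) : Prop :=
  c.state = M.accept ∨ c.state = M.reject

/-- `p` is a computation (run) of length `n` of `M` on input `x`: it starts in the
initial configuration, performs `n` steps, and does not halt before step `n`. -/
def IsRun {α β Γ : Type} (M : NPFTM α β Γ) (x : List α) (p : ℕ → TMConfig M.Q Γ)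
    (n : ℕ) : Prop :=
  p 0 = M.initConfig x ∧ ∀ i < n, ¬ M.Halted (p i) ∧ M.StepRel (p i) (p (i + 1))

/-- `M` computes the partial function `f`: `f x = some y` iff some computation of `M`
on `x` halts accepting with tape content starting ⊞ y □.  (In particular any two
accepting computations on the same input produce the same output.) -/
def Computes {α β Γ : Type} (M : NPFTM α β Γ) (f : List α → Option (List β)) : Prop :=
  ∀ x y, f x = some y ↔
    ∃ (p : ℕ → TMConfig M.Q Γ) (n : ℕ), M.IsRun x p n ∧ (p n).state = M.accept ∧
      TapeStartsWith (p n).tape (y.map M.outputEmb)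

/-- Every computation (accepting or not) on input `x` lasts at most `c·(|x|+1)` steps. -/
def LinearTime {α β Γ : Type} (M : NPFTM α β Γ) : Prop :=
  ∃ c : ℕ, ∀ (x : List α) (p : ℕ → TMConfig M.Q Γ) (n : ℕ),
    M.IsRun x p n → n ≤ c * (x.length + 1)

end NPFTM

/-- The length of the longest datum among `T 0, …, T n`. -/
def maxLen {σ : Type} (T : ℕ → List σ) (n : ℕ) : ℕ :=
  (Finset.range (n + 1)).sup fun i => (T i).length

/-- `T` is a text for the language `Lang`: it enumerates exactly the elements of `Lang`. -/
def IsTextFor {σ : Type} (T : ℕ → List σ) (Lang : Set (List σ)) : Prop :=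
  Set.range T = Lang

/-- An automatic family of (nonempty) languages over the alphabet `σ`, indexed by a
regular set of strings over the alphabet `ι`. -/
structure AutoFam (ι σ : Type) [Fintype ι] [Fintype σ] where
  Idx : Set (List ι)
  L : List ι → Set (List σ)
  regIdx : IsRegularLang Idx
  regFam : IsRegularLang { w | ∃ e x, e ∈ Idx ∧ x ∈ L e ∧ w = convP e x }
  nonemptyL : ∀ e ∈ Idx, (L e).Nonempty

/-- An abstract learner: it maps (old memory, new datum) to (new memory, conjecture),
starting from a fixed initial memory. -/
structure PLearner (σ μ ι : Type) where
  minit : List μ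
  lstep : List μ → List σ → List μ × List ι

namespace PLearner

/-- The memory of the learner after having processed `T 0, …, T (n-1)`. -/
def mem {σ μ ι : Type} (M : PLearner σ μ ι) (T : ℕ → List σ) : ℕ → List μ
  | 0 => M.minit
  | n + 1 => (M.lstep (PLearner.mem M T n) (T n)).1

/-- The conjecture of the learner after having processed `T 0, …, T n`. -/
def hyp {σ μ ι : Type} (M : PLearner σ μ ι) (T : ℕ → List σ) (n : ℕ) : List ι :=
  (M.lstep (M.mem T n) (T n)).2

/-- The learner is automatic: the graph of its update function, as a set of
convolutions, is regular. -/
def Automatic {σ μ ι : Type} [Fintype σ] [Fintype μ] [Fintype ι]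
    (M : PLearner σ μ ι) : Prop :=
  IsRegularLang { w | ∃ om dat, w = conv4 om dat (M.lstep om dat).1 (M.lstep om dat).2 }

/-- The memory of the learner is bounded in length by the length of the longest datum
seen so far plus a constant. -/
def MemBounded {σ μ ι : Type} (M : PLearner σ μ ι) : Prop :=
  ∃ c : ℕ, ∀ (T : ℕ → List σ) (n : ℕ), (M.mem T (n + 1)).length ≤ maxLen T n + c

/-- The learner learns the family `(Idx, L)`: on every text for some `L e₀` with
`e₀ ∈ Idx`, its conjectures converge to a fixed index `e ∈ Idx` with `L e = L e₀`. -/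
def Learns {σ μ ι : Type} (M : PLearner σ μ ι)
    (Idx : Set (List ι)) (L : List ι → Set (List σ)) : Prop :=
  ∀ e₀ ∈ Idx, ∀ T : ℕ → List σ, IsTextFor T (L e₀) →
    ∃ e ∈ Idx, L e = L e₀ ∧ ∃ N, ∀ n ≥ N, M.hyp T n = e

end PLearner

/-- An unrestricted learner whose long-term memory is an arbitrary natural number. -/
structure RecLearner (σ ι : Type) where
  minit : ℕ
  lstep : ℕ × List σ → ℕ × List ι

namespace RecLearner

def mem {σ ι : Type} (M : RecLearner σ ι) (T : ℕ → List σ) : ℕ → ℕ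
  | 0 => M.minit
  | n + 1 => (M.lstep (RecLearner.mem M T n, T n)).1

def hyp {σ ι : Type} (M : RecLearner σ ι) (T : ℕ → List σ) (n : ℕ) : List ι :=
  (M.lstep (M.mem T n, T n)).2

/-- The learner is recursive: its update function is computable. -/
def Recursive {σ ι : Type} [Primcodable σ] [Primcodable ι] (M : RecLearner σ ι) : Prop :=
  Computable M.lstep

def Learns {σ ι : Type} (M : RecLearner σ ι)
    (Idx : Set (List ι)) (L : List ι → Set (List σ)) : Prop :=
  ∀ e₀ ∈ Idx, ∀ T : ℕ → List σ, IsTextFor T (L e₀) →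
    ∃ e ∈ Idx, L e = L e₀ ∧ ∃ N, ∀ n ≥ N, M.hyp T n = e

end RecLearner

/-- A linear-time learner with a base tape (Tape 0) and `k` additional work tapes.
Tape 0 holds convolutions of strings over `Γ`, the work tapes hold symbols from `Γ`.
All tapes are one-sided infinite with the unmodifiable left-end marker ⊞ at cell 0. -/
structure TapeLearner (Γ : Type) (k : ℕ) where
  Q : Type
  finQ : Fintype Q
  finΓ : Fintype Γ
  init : Q
  halt : Q
  δ : Q → TSym (Option Γ × Option Γ) → (Fin k → TSym Γ) →
      Q × (TSym (Option Γ × Option Γ) × Bool) × (Fin k → TSym Γ × Bool)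
  faithful0_end : ∀ q v, ((δ q TSym.lend v).2.1).1 = TSym.lend ∧
    ((δ q TSym.lend v).2.1).2 = true
  faithful0_noend : ∀ q a v, a ≠ TSym.lend → ((δ q a v).2.1).1 ≠ TSym.lend
  faithfulk_end : ∀ q a v i, v i = TSym.lend →
    ((δ q a v).2.2 i).1 = TSym.lend ∧ ((δ q a v).2.2 i).2 = true
  faithfulk_noend : ∀ q a v i, v i ≠ TSym.lend → ((δ q a v).2.2 i).1 ≠ TSym.lend

/-- A configuration of a tape learner within one cycle. -/
structure TLConfig (Q Γ : Type) (k : ℕ) where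
  state : Q
  t0 : ℕ → TSym (Option Γ × Option Γ)
  h0 : ℕ
  tp : Fin k → ℕ → TSym Γ
  hd : Fin k → ℕ

namespace TapeLearner

def step {Γ : Type} {k : ℕ} (M : TapeLearner Γ k) (c : TLConfig M.Q Γ k) :
    TLConfig M.Q Γ k :=
  let r := M.δ c.state (c.t0 c.h0) fun i => c.tp i (c.hd i)
  { state := r.1
    t0 := Function.update c.t0 c.h0 r.2.1.1
    h0 := tmove r.2.1.2 c.h0
    tp := fun i => Function.update (c.tp i) (c.hd i) (r.2.2 i).1
    hd := fun i => tmove (r.2.2 i).2 (c.hd i) }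

/-- The configuration at the start of a cycle: Tape 0 holds ⊞ conv(dat, mem) □ ⋯ with
its head on ⊞; the work tapes and their head positions persist from the previous cycle. -/
def cycleStart {Γ : Type} {k : ℕ} (M : TapeLearner Γ k) (tp : Fin k → ℕ → TSym Γ)
    (hd : Fin k → ℕ) (mem dat : List Γ) : TLConfig M.Q Γ k :=
  ⟨M.init, listTape (convP dat mem), 0, tp, hd⟩

/-- One learning cycle: on datum `dat` with old long-term memory `mem` and work tapes
`(tp, hd)`, the machine halts after exactly `t` steps, with Tape 0 starting with
⊞ conv(mem', hyp) □ and with work tapes `(tp', hd')`. -/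
def CycleRun {Γ : Type} {k : ℕ} (M : TapeLearner Γ k)
    (tp : Fin k → ℕ → TSym Γ) (hd : Fin k → ℕ) (mem dat : List Γ)
    (tp' : Fin k → ℕ → TSym Γ) (hd' : Fin k → ℕ) (mem' hyp : List Γ) (t : ℕ) : Prop :=
  let c0 := M.cycleStart tp hd mem dat
  (∀ m < t, (M.step^[m] c0).state ≠ M.halt) ∧ (M.step^[t] c0).state = M.halt ∧
    TapeStartsWith (M.step^[t] c0).t0 (convP mem' hyp) ∧
    (M.step^[t] c0).tp = tp' ∧ (M.step^[t] c0).hd = hd'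

/-- The learner learns the family `(Idx, L)` where, with `bound T n` playing the role of
"the length of the longest datum seen so far":  each cycle takes at most
`c·(bound+1)` steps, the long-term memory on Tape 0 and the conjectures have length at
most `bound` plus a constant, and the conjectures converge to a correct index. -/
def LearnsWithBounds {Γ σ ι : Type} {k : ℕ} (M : TapeLearner Γ k)
    (embσ : σ → Γ) (embι : ι → Γ) (Idx : Set (List ι)) (L : List ι → Set (List σ))
    (bound : (ℕ → List σ) → ℕ → ℕ) : Prop :=
  ∃ c : ℕ, ∀ e₀ ∈ Idx, ∀ T : ℕ → List σ, IsTextFor T (L e₀) →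
    ∃ (mem hyp : ℕ → List Γ) (tp : ℕ → Fin k → ℕ → TSym Γ) (hd : ℕ → Fin k → ℕ)
      (t : ℕ → ℕ),
      mem 0 = [] ∧ (∀ i, tp 0 i = listTape ([] : List Γ)) ∧ (∀ i, hd 0 i = 0) ∧
      (∀ n, M.CycleRun (tp n) (hd n) (mem n) ((T n).map embσ)
        (tp (n + 1)) (hd (n + 1)) (mem (n + 1)) (hyp n) (t n)) ∧
      (∀ n, t n ≤ c * (bound T n + 1)) ∧
      (∀ n, (mem (n + 1)).length ≤ bound T n + c) ∧
      (∀ n, (hyp n).length ≤ bound T n + c) ∧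
      (∃ e ∈ Idx, L e = L e₀ ∧ ∃ N, ∀ n ≥ N, hyp n = e.map embι)

/-- Linear-time learning: all resource bounds are in terms of the length of the longest
datum seen so far. -/
def LearnsLin {Γ σ ι : Type} {k : ℕ} (M : TapeLearner Γ k)
    (embσ : σ → Γ) (embι : ι → Γ) (Idx : Set (List ι))
    (L : List ι → Set (List σ)) : Prop :=
  M.LearnsWithBounds embσ embι Idx L fun T n => maxLen T n

end TapeLearner

/-- An operation on a stack: push a symbol, pop the top symbol, or do nothing. -/
inductive StackOp (Γ : Type) : Type
  | push : Γ → StackOp Γ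
  | pop : StackOp Γ
  | skip : StackOp Γ

def applyStackOp {Γ : Type} (op : StackOp Γ) (s : List Γ) : List Γ :=
  match op with
  | StackOp.push a => a :: s
  | StackOp.pop => s.tail
  | StackOp.skip => s

/-- A linear-time learner with a base tape (Tape 0) and `k` additional stacks.
In each step it sees the top symbols of the stacks and may push or pop one symbol
on each stack. -/
structure StackLearner (Γ : Type) (k : ℕ) where
  Q : Type
  finQ : Fintype Q
  finΓ : Fintype Γ
  init : Q
  halt : Q
  δ : Q → TSym (Option Γ × Option Γ) → (Fin k → Option Γ) →
      Q × (TSym (Option Γ × Option Γ) × Bool) × (Fin k → StackOp Γ)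
  faithful0_end : ∀ q v, ((δ q TSym.lend v).2.1).1 = TSym.lend ∧
    ((δ q TSym.lend v).2.1).2 = true
  faithful0_noend : ∀ q a v, a ≠ TSym.lend → ((δ q a v).2.1).1 ≠ TSym.lend

structure SLConfig (Q Γ : Type) (k : ℕ) where
  state : Q
  t0 : ℕ → TSym (Option Γ × Option Γ)
  h0 : ℕ
  stks : Fin k → List Γ

namespace StackLearner

def step {Γ : Type} {k : ℕ} (M : StackLearner Γ k) (c : SLConfig M.Q Γ k) :
    SLConfig M.Q Γ k :=
  let r := M.δ c.state (c.t0 c.h0) fun i => (c.stks i).head?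
  { state := r.1
    t0 := Function.update c.t0 c.h0 r.2.1.1
    h0 := tmove r.2.1.2 c.h0
    stks := fun i => applyStackOp (r.2.2 i) (c.stks i) }

def cycleStart {Γ : Type} {k : ℕ} (M : StackLearner Γ k) (stks : Fin k → List Γ)
    (mem dat : List Γ) : SLConfig M.Q Γ k :=
  ⟨M.init, listTape (convP dat mem), 0, stks⟩

/-- One learning cycle of a stack learner. -/
def CycleRun {Γ : Type} {k : ℕ} (M : StackLearner Γ k) (stks : Fin k → List Γ)
    (mem dat : List Γ) (stks' : Fin k → List Γ) (mem' hyp : List Γ) (t : ℕ) : Prop :=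
  let c0 := M.cycleStart stks mem dat
  (∀ m < t, (M.step^[m] c0).state ≠ M.halt) ∧ (M.step^[t] c0).state = M.halt ∧
    TapeStartsWith (M.step^[t] c0).t0 (convP mem' hyp) ∧
    (M.step^[t] c0).stks = stks'

def LearnsWithBounds {Γ σ ι : Type} {k : ℕ} (M : StackLearner Γ k)
    (embσ : σ → Γ) (embι : ι → Γ) (Idx : Set (List ι)) (L : List ι → Set (List σ))
    (bound : (ℕ → List σ) → ℕ → ℕ) : Prop :=
  ∃ c : ℕ, ∀ e₀ ∈ Idx, ∀ T : ℕ → List σ, IsTextFor T (L e₀) →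
    ∃ (mem hyp : ℕ → List Γ) (stks : ℕ → Fin k → List Γ) (t : ℕ → ℕ),
      mem 0 = [] ∧ (∀ i, stks 0 i = []) ∧
      (∀ n, M.CycleRun (stks n) (mem n) ((T n).map embσ)
        (stks (n + 1)) (mem (n + 1)) (hyp n) (t n)) ∧
      (∀ n, t n ≤ c * (bound T n + 1)) ∧
      (∀ n, (mem (n + 1)).length ≤ bound T n + c) ∧
      (∀ n, (hyp n).length ≤ bound T n + c) ∧
      (∃ e ∈ Idx, L e = L e₀ ∧ ∃ N, ∀ n ≥ N, hyp n = e.map embι)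

def LearnsLin {Γ σ ι : Type} {k : ℕ} (M : StackLearner Γ k)
    (embσ : σ → Γ) (embι : ι → Γ) (Idx : Set (List ι))
    (L : List ι → Set (List σ)) : Prop :=
  M.LearnsWithBounds embσ embι Idx L fun T n => maxLen T n

/-- Learning without any time or memory bound requirements. -/
def LearnsPlain {Γ σ ι : Type} {k : ℕ} (M : StackLearner Γ k)
    (embσ : σ → Γ) (embι : ι → Γ) (Idx : Set (List ι))
    (L : List ι → Set (List σ)) : Prop :=
  ∀ e₀ ∈ Idx, ∀ T : ℕ → List σ, IsTextFor T (L e₀) →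
    ∃ (mem hyp : ℕ → List Γ) (stks : ℕ → Fin k → List Γ) (t : ℕ → ℕ),
      mem 0 = [] ∧ (∀ i, stks 0 i = []) ∧
      (∀ n, M.CycleRun (stks n) (mem n) ((T n).map embσ)
        (stks (n + 1)) (mem (n + 1)) (hyp n) (t n)) ∧
      (∃ e ∈ Idx, L e = L e₀ ∧ ∃ N, ∀ n ≥ N, hyp n = e.map embι)

end StackLearner

/-- An operation on a queue: optionally enqueue a symbol at the write-end and
optionally dequeue the symbol at the read-end. -/
def applyQueueOp {Γ : Type} (op : Option Γ × Bool) (q : List Γ) : List Γ :=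
  (if op.2 then q.tail else q) ++ op.1.toList

/-- A linear-time learner with a base tape (Tape 0) and `k` additional queues.
In each step it sees the front symbols of the queues; on each queue it can enqueue
at most one symbol and dequeue at most one symbol. -/
structure QueueLearner (Γ : Type) (k : ℕ) where
  Q : Type
  finQ : Fintype Q
  finΓ : Fintype Γ
  init : Q
  halt : Q
  δ : Q → TSym (Option Γ × Option Γ) → (Fin k → Option Γ) →
      Q × (TSym (Option Γ × Option Γ) × Bool) × (Fin k → Option Γ × Bool)
  faithful0_end : ∀ q v, ((δ q TSym.lend v).2.1).1 = TSym.lend ∧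
    ((δ q TSym.lend v).2.1).2 = true
  faithful0_noend : ∀ q a v, a ≠ TSym.lend → ((δ q a v).2.1).1 ≠ TSym.lend

structure QLConfig (Q Γ : Type) (k : ℕ) where
  state : Q
  t0 : ℕ → TSym (Option Γ × Option Γ)
  h0 : ℕ
  qs : Fin k → List Γ

namespace QueueLearner

def step {Γ : Type} {k : ℕ} (M : QueueLearner Γ k) (c : QLConfig M.Q Γ k) :
    QLConfig M.Q Γ k :=
  let r := M.δ c.state (c.t0 c.h0) fun i => (c.qs i).head?
  { state := r.1
    t0 := Function.update c.t0 c.h0 r.2.1.1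
    h0 := tmove r.2.1.2 c.h0
    qs := fun i => applyQueueOp (r.2.2 i) (c.qs i) }

def cycleStart {Γ : Type} {k : ℕ} (M : QueueLearner Γ k) (qs : Fin k → List Γ)
    (mem dat : List Γ) : QLConfig M.Q Γ k :=
  ⟨M.init, listTape (convP dat mem), 0, qs⟩

/-- One learning cycle of a queue learner. -/
def CycleRun {Γ : Type} {k : ℕ} (M : QueueLearner Γ k) (qs : Fin k → List Γ)
    (mem dat : List Γ) (qs' : Fin k → List Γ) (mem' hyp : List Γ) (t : ℕ) : Prop :=
  let c0 := M.cycleStart qs mem dat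
  (∀ m < t, (M.step^[m] c0).state ≠ M.halt) ∧ (M.step^[t] c0).state = M.halt ∧
    TapeStartsWith (M.step^[t] c0).t0 (convP mem' hyp) ∧
    (M.step^[t] c0).qs = qs'

def LearnsWithBounds {Γ σ ι : Type} {k : ℕ} (M : QueueLearner Γ k)
    (embσ : σ → Γ) (embι : ι → Γ) (Idx : Set (List ι)) (L : List ι → Set (List σ))
    (bound : (ℕ → List σ) → ℕ → ℕ) : Prop :=
  ∃ c : ℕ, ∀ e₀ ∈ Idx, ∀ T : ℕ → List σ, IsTextFor T (L e₀) →
    ∃ (mem hyp : ℕ → List Γ) (qs : ℕ → Fin k → List Γ) (t : ℕ → ℕ),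
      mem 0 = [] ∧ (∀ i, qs 0 i = []) ∧
      (∀ n, M.CycleRun (qs n) (mem n) ((T n).map embσ)
        (qs (n + 1)) (mem (n + 1)) (hyp n) (t n)) ∧
      (∀ n, t n ≤ c * (bound T n + 1)) ∧
      (∀ n, (mem (n + 1)).length ≤ bound T n + c) ∧
      (∀ n, (hyp n).length ≤ bound T n + c) ∧
      (∃ e ∈ Idx, L e = L e₀ ∧ ∃ N, ∀ n ≥ N, hyp n = e.map embι)

def LearnsLin {Γ σ ι : Type} {k : ℕ} (M : QueueLearner Γ k)
    (embσ : σ → Γ) (embι : ι → Γ) (Idx : Set (List ι))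
    (L : List ι → Set (List σ)) : Prop :=
  M.LearnsWithBounds embσ embι Idx L fun T n => maxLen T n

end QueueLearner

namespace StackLearner

/-- `M.Processes s mem stks hyp`: starting from empty long-term memory and empty
stacks, processing the finite sequence `s` of data cycle by cycle (each cycle
halting) leaves the learner with Tape-0 memory `mem`, stack contents `stks` and last
conjecture `hyp`. -/
inductive Processes {Γ : Type} (M : StackLearner Γ 1) :
    List (List Γ) → List Γ → (Fin 1 → List Γ) → List Γ → Prop
  | nil : Processes M [] [] (fun _ => []) []
  | snoc {s : List (List Γ)} {mem : List Γ} {stks : Fin 1 → List Γ} {hyp : List Γ}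
      {dat mem' hyp' : List Γ} {stks' : Fin 1 → List Γ} {t : ℕ} :
      Processes M s mem stks hyp →
      M.CycleRun stks mem dat stks' mem' hyp' t →
      Processes M (s ++ [dat]) mem' stks' hyp'

end StackLearner

section Aux

lemma convP_inj {α β : Type} {x x' : List α} {y y' : List β}
    (h : convP x y = convP x' y') : x = x' ∧ y = y' := by
  have hlen : max x.length y.length = max x'.length y'.length := by
    have := congrArg List.length h
    simpa [convP] using this
  have hget : ∀ i : ℕ, x[i]? = x'[i]? ∧ y[i]? = y'[i]? := by
    intro i
    by_cases hi : i < max x.length y.length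
    · have h1 : (convP x y)[i]? = some (x[i]?, y[i]?) := by
        simp [convP, hi]
      have h2 : (convP x' y')[i]? = some (x'[i]?, y'[i]?) := by
        simp [convP, (hlen ▸ hi : i < max x'.length y'.length)]
      rw [h, h2] at h1
      have h3 := Option.some.inj h1
      exact ⟨(congrArg Prod.fst h3).symm, (congrArg Prod.snd h3).symm⟩
    · push_neg at hi
      refine ⟨?_, ?_⟩
      · rw [List.getElem?_eq_none (le_trans (le_max_left _ _) hi),
          List.getElem?_eq_none (le_trans (le_trans (le_max_left _ _) hlen.ge) hi)]
      · rw [List.getElem?_eq_none (le_trans (le_max_right _ _) hi),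
          List.getElem?_eq_none (le_trans (le_trans (le_max_right _ _) hlen.ge) hi)]
  exact ⟨List.ext_getElem? fun i => (hget i).1, List.ext_getElem? fun i => (hget i).2⟩

lemma tapeStartsWith_unique {Γ : Type} {t : ℕ → TSym Γ} {w w' : List Γ}
    (h : TapeStartsWith t w) (h' : TapeStartsWith t w') : w = w' := by
  obtain ⟨-, hw, hwb⟩ := h
  obtain ⟨-, hw', hwb'⟩ := h'
  have hlen : w.length = w'.length := by
    by_contra hne
    rcases Nat.lt_or_ge w.length w'.length with hlt | hge
    · have := hw' ⟨w.length, hlt⟩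
      rw [hwb] at this
      cases this
    · have hlt : w'.length < w.length := lt_of_le_of_ne hge (Ne.symm hne)
      have := hw ⟨w'.length, hlt⟩
      rw [hwb'] at this
      cases this
  apply List.ext_get hlen
  intro i hi1 hi2
  have e1 := hw ⟨i, hi1⟩
  have e2 := hw' ⟨i, hi2⟩
  rw [e1] at e2
  exact TSym.sym.inj e2

lemma cycleRun_unique {Γ : Type} {k : ℕ} (M : StackLearner Γ k)
    {stks : Fin k → List Γ} {mem dat : List Γ}
    {s1 s2 : Fin k → List Γ} {m1 m2 hy1 hy2 : List Γ} {t1 t2 : ℕ}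
    (c1 : M.CycleRun stks mem dat s1 m1 hy1 t1)
    (c2 : M.CycleRun stks mem dat s2 m2 hy2 t2) :
    m1 = m2 ∧ hy1 = hy2 ∧ s1 = s2 := by
  obtain ⟨n1, e1, tp1, sk1⟩ := c1
  obtain ⟨n2, e2, tp2, sk2⟩ := c2
  have ht : t1 = t2 := by
    rcases Nat.lt_trichotomy t1 t2 with h | h | h
    · exact absurd e1 (n2 _ h)
    · exact h
    · exact absurd e2 (n1 _ h)
  subst ht
  have hc := tapeStartsWith_unique tp1 tp2
  obtain ⟨hm, hh⟩ := convP_inj hc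
  exact ⟨hm, hh, sk1.symm.trans sk2⟩

lemma processes_run {Γ : Type} (M : StackLearner Γ 1)
    {s : List (List Γ)} {mem : List Γ} {stk : Fin 1 → List Γ} {hyp : List Γ}
    (hp : M.Processes s mem stk hyp)
    (D : ℕ → List Γ) (memn hypn : ℕ → List Γ) (stksn : ℕ → Fin 1 → List Γ)
    (tn : ℕ → ℕ)
    (h0 : memn 0 = []) (hs0 : ∀ i, stksn 0 i = [])
    (hcyc : ∀ n, M.CycleRun (stksn n) (memn n) (D n)
      (stksn (n + 1)) (memn (n + 1)) (hypn n) (tn n))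
    (hD : ∀ i (h : i < s.length), D i = s.get ⟨i, h⟩) :
    memn s.length = mem ∧ stksn s.length = stk := by
  induction hp with
  | nil => exact ⟨h0, funext hs0⟩
  | @snoc s mem stks hyp dat mem' hyp' stks' t _ hcy ih =>
    have hlen : (s ++ [dat]).length = s.length + 1 := by simp
    have ih' := ih (fun i h => by
      rw [hD i (by simp; omega)]
      have : i < (s ++ [dat]).length := by simp; omega
      simp [List.get_eq_getElem, List.getElem_append_left h])
    have hdat : D s.length = dat := by
      rw [hD s.length (by simp)]
      simp [List.get_eq_getElem]
    have hcyc' := hcyc s.length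
    rw [hdat, ih'.1, ih'.2] at hcyc'
    obtain ⟨hm, -, hs⟩ := cycleRun_unique M hcyc' hcy
    rw [hlen]
    exact ⟨hm, hs⟩

lemma isTextFor_aux {a b : List (Fin 2)} (σs : List (List (Fin 2)))
    (ha : a ∈ σs) (hb : b ∉ σs) (R : ℕ → List (Fin 2))
    (hR : ∀ x, x ∈ Set.range R ↔ x ≠ a ∧ x ≠ b) :
    IsTextFor (fun n => if h : n < σs.length then σs.get ⟨n, h⟩
      else R (n - σs.length)) {x | x ≠ b} := by
  ext x
  constructor
  · rintro ⟨n, rfl⟩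
    by_cases h : n < σs.length
    · simp only [h, dif_pos]
      intro hx
      exact hb (hx ▸ List.get_mem σs ⟨n, h⟩)
    · simp only [h, dif_neg]
      exact ((hR _).1 ⟨_, rfl⟩).2
  · intro hx
    by_cases hxa : x = a
    · obtain ⟨i, hi⟩ := List.mem_iff_get.1 (hxa ▸ ha)
      refine ⟨i.1, ?_⟩
      simp only [i.2, dif_pos]
      exact hi
    · obtain ⟨n, hn⟩ := (hR x).2 ⟨hxa, hx⟩
      refine ⟨σs.length + n, ?_⟩
      simp [hn]

end Aux

/-- let `M` be a learner with one additional stack attempting to learn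
the class of all `L_e = {0,1}* − {e}`.  If two finite sequences `σs` and `τs` of binary
strings with `range σs − range τs ≠ ∅` and `range τs − range σs ≠ ∅` leave `M` with the
same Tape-0 content and the same stack content, then `M` does not learn the class. -/
theorem stmt16 {Γ : Type} (M : StackLearner Γ 1)
    (embσ embι : Fin 2 → Γ)
    (hσinj : Function.Injective embσ) (hιinj : Function.Injective embι)
    (σs τs : List (List (Fin 2)))
    (h1 : ∃ w, w ∈ σs ∧ w ∉ τs) (h2 : ∃ w, w ∈ τs ∧ w ∉ σs)
    (mem : List Γ) (stk : Fin 1 → List Γ) (hyp : List Γ)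
    (hp1 : M.Processes (σs.map fun w => w.map embσ) mem stk hyp)
    (hp2 : M.Processes (τs.map fun w => w.map embσ) mem stk hyp) :
    ¬ M.LearnsPlain embσ embι (Set.univ : Set (List (Fin 2)))
        (fun e => { x | x ≠ e }) := by
  intro hlearn
  obtain ⟨a, haσ, haτ⟩ := h1
  obtain ⟨b, hbτ, hbσ⟩ := h2
  have hab : a ≠ b := fun h => hbσ (h ▸ haσ)
  -- a fixed element distinct from a and b
  obtain ⟨c, hc⟩ := Infinite.exists_notMem_finset ({a, b} : Finset (List (Fin 2)))
  simp only [Finset.mem_insert, Finset.mem_singleton, not_or] at hc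
  -- enumeration of all binary strings
  haveI : Denumerable (List (Fin 2)) := Denumerable.ofEncodableOfInfinite _
  set g : ℕ ≃ List (Fin 2) := (Denumerable.eqv (List (Fin 2))).symm with hg
  set R : ℕ → List (Fin 2) :=
    fun n => if g n = a ∨ g n = b then c else g n with hRdef
  have hR : ∀ x, x ∈ Set.range R ↔ x ≠ a ∧ x ≠ b := by
    intro x
    constructor
    · rintro ⟨n, rfl⟩
      by_cases h : g n = a ∨ g n = b
      · simp only [hRdef, h, if_pos]; exact hc
      · push_neg at h; simpa [hRdef, h]
    · rintro ⟨hxa, hxb⟩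
      exact ⟨g.symm x, by simp [hRdef, hxa, hxb]⟩
  have hR' : ∀ x, x ∈ Set.range R ↔ x ≠ b ∧ x ≠ a := by
    intro x; rw [hR]; tauto
  set Tσ : ℕ → List (Fin 2) :=
    fun n => if h : n < σs.length then σs.get ⟨n, h⟩ else R (n - σs.length) with hTσ
  set Tτ : ℕ → List (Fin 2) :=
    fun n => if h : n < τs.length then τs.get ⟨n, h⟩ else R (n - τs.length) with hTτ
  have htextσ : IsTextFor Tσ {x | x ≠ b} := isTextFor_aux σs haσ hbσ R hR
  have htextτ : IsTextFor Tτ {x | x ≠ a} := isTextFor_aux τs hbτ haτ R hR'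
  obtain ⟨memσ, hypσ, stksσ, tσ, hm0σ, hs0σ, hcycσ, eσ, -, hLσ, Nσ, hNσ⟩ :=
    hlearn b (Set.mem_univ _) Tσ htextσ
  obtain ⟨memτ, hypτ, stksτ, tτ, hm0τ, hs0τ, hcycτ, eτ, -, hLτ, Nτ, hNτ⟩ :=
    hlearn a (Set.mem_univ _) Tτ htextτ
  -- the limiting indices are forced
  have heσ : eσ = b := by
    by_contra hne
    have hset : ({x | x ≠ eσ} : Set (List (Fin 2))) = {x | x ≠ b} := hLσ
    have hbm : b ∈ ({x | x ≠ eσ} : Set (List (Fin 2))) := Ne.symm hne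
    rw [hset] at hbm
    exact hbm rfl
  have heτ : eτ = a := by
    by_contra hne
    have hset : ({x | x ≠ eτ} : Set (List (Fin 2))) = {x | x ≠ a} := hLτ
    have ham : a ∈ ({x | x ≠ eτ} : Set (List (Fin 2))) := Ne.symm hne
    rw [hset] at ham
    exact ham rfl
  rw [heσ] at hNσ
  rw [heτ] at hNτ
  -- after the prefixes, memories and stacks agree
  have hpreσ := processes_run M hp1 (fun n => (Tσ n).map embσ) memσ hypσ stksσ tσ
    hm0σ hs0σ hcycσ (fun i h => by
      rw [List.length_map] at h
      simp [hTσ, h, List.get_eq_getElem])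
  have hpreτ := processes_run M hp2 (fun n => (Tτ n).map embσ) memτ hypτ stksτ tτ
    hm0τ hs0τ hcycτ (fun i h => by
      rw [List.length_map] at h
      simp [hTτ, h, List.get_eq_getElem])
  rw [List.length_map] at hpreσ hpreτ
  have hdat : ∀ n, Tσ (σs.length + n) = Tτ (τs.length + n) := by
    intro n; simp [hTσ, hTτ]
  have key : ∀ n, memσ (σs.length + n) = memτ (τs.length + n) ∧
      stksσ (σs.length + n) = stksτ (τs.length + n) := by
    intro n
    induction n with
    | zero => exact ⟨hpreσ.1.trans hpreτ.1.symm, hpreσ.2.trans hpreτ.2.symm⟩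
    | succ n ih =>
      have hcσ := hcycσ (σs.length + n)
      have hcτ := hcycτ (τs.length + n)
      rw [ih.1, ih.2, hdat n] at hcσ
      obtain ⟨hm, -, hs⟩ := cycleRun_unique M hcσ hcτ
      exact ⟨by rw [← Nat.add_assoc, ← Nat.add_assoc]; exact hm,
        by rw [← Nat.add_assoc, ← Nat.add_assoc]; exact hs⟩
  have keyh : ∀ n, hypσ (σs.length + n) = hypτ (τs.length + n) := by
    intro n
    have hcσ := hcycσ (σs.length + n)
    have hcτ := hcycτ (τs.length + n)
    rw [(key n).1, (key n).2, hdat n] at hcσ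
    exact (cycleRun_unique M hcσ hcτ).2.1
  -- contradiction at a late stage
  have h1 : hypσ (σs.length + (Nσ + Nτ)) = b.map embι :=
    hNσ _ (by omega)
  have h2 : hypτ (τs.length + (Nσ + Nτ)) = a.map embι :=
    hNτ _ (by omega)
  have := (keyh (Nσ + Nτ)).symm.trans h1
  rw [h2] at this
  exact hab (List.map_injective_iff.2 hιinj this)
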